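/- If s ∈ [0, √2] and f^(n)(s) = 0 for some n ∈ ℕ, then s ∈ ℤ[√2]. -/

import Mathlib

noncomputable section

/-- `β = √2 - 1`. -/
def β : ℝ := Real.sqrt 2 - 1

/-- `ω = √2 + 1`. -/
def ω : ℝ := Real.sqrt 2 + 1

/-- The break points `Δ_i`. -/
def Δ (i : ℤ) : ℝ :=
  if i < 0 then β ^ i.natAbs
  else if i = 0 then β
  else Real.sqrt 2 - β ^ i.natAbs

/-- The intervals `I_i`. -/
def Iint (i : ℤ) : Set ℝ :=
  if i < 0 then Set.Ioc (Δ (i - 1)) (Δ i)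
  else if i = 0 then Set.Ioo β 1
  else Set.Ico (Δ i) (Δ (i + 1))

/-- The defining formula of `f` on the interval `I_i`. -/
def fval (i : ℤ) (s : ℝ) : ℝ :=
  if i < 0 then ω ^ (i.natAbs + 1) * (Δ i - s)
  else if i = 0 then ω * (s - β)
  else ω ^ (i.natAbs + 1) * (s - Δ i)

/-- `f` is the renormalization map: `f 0 = f √2 = 0` and on each interval `I_i`
    it is given by the corresponding affine formula. These conditions determine
    `f` uniquely on `[0, √2]`. -/
def IsLuroth (f : ℝ → ℝ) : Prop :=
  f 0 = 0 ∧ f (Real.sqrt 2) = 0 ∧ ∀ i : ℤ, ∀ s ∈ Iint i, f s = fval i s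

/-- `ℚ(√2)` as a subset of `ℝ`. -/
def QSqrt2 : Set ℝ := {x | ∃ a b : ℚ, x = (a : ℝ) + (b : ℝ) * Real.sqrt 2}

/-- `ℤ[√2]` as a subset of `ℝ`. -/
def ZSqrt2 : Set ℝ := {x | ∃ m n : ℤ, x = (m : ℝ) + (n : ℝ) * Real.sqrt 2}

/-- `M_d = {s ∈ [0,√2] : d·s ∈ ℤ[√2]}`. -/
def Mset (d : ℤ) : Set ℝ :=
  {s | s ∈ Set.Icc 0 (Real.sqrt 2) ∧ (d : ℝ) * s ∈ ZSqrt2}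

/- ### Auxiliary lemmas -/

lemma aux_h2 : Real.sqrt 2 * Real.sqrt 2 = 2 := Real.mul_self_sqrt (by norm_num)

lemma sqrt2_gt_one : 1 < Real.sqrt 2 := by nlinarith [Real.sqrt_nonneg 2, aux_h2]

lemma sqrt2_lt_two : Real.sqrt 2 < 2 := by nlinarith [Real.sqrt_nonneg 2, aux_h2]

lemma βpos : 0 < β := by unfold β; linarith [sqrt2_gt_one]
lemma βlt1 : β < 1 := by unfold β; linarith [sqrt2_lt_two]
lemma ωpos : 0 < ω := by unfold ω; linarith [sqrt2_gt_one]
lemma βω : β * ω = 1 := by unfold β ω; nlinarith [aux_h2]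
lemma βωpow (k : ℕ) : β ^ k * ω ^ k = 1 := by rw [← mul_pow, βω, one_pow]

lemma zs_add {x y : ℝ} (hx : x ∈ ZSqrt2) (hy : y ∈ ZSqrt2) : x + y ∈ ZSqrt2 := by
  obtain ⟨a, b, rfl⟩ := hx
  obtain ⟨c, d, rfl⟩ := hy
  exact ⟨a + c, b + d, by push_cast; ring⟩

lemma zs_mul {x y : ℝ} (hx : x ∈ ZSqrt2) (hy : y ∈ ZSqrt2) : x * y ∈ ZSqrt2 := by
  obtain ⟨a, b, rfl⟩ := hx
  obtain ⟨c, d, rfl⟩ := hy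
  refine ⟨a * c + 2 * b * d, a * d + b * c, ?_⟩
  push_cast
  linear_combination ((b : ℝ) * (d : ℝ)) * aux_h2

lemma zs_sqrt2 : Real.sqrt 2 ∈ ZSqrt2 := ⟨0, 1, by norm_num⟩
lemma zs_β : β ∈ ZSqrt2 := ⟨-1, 1, by unfold β; push_cast; ring⟩
lemma zs_neg_one : (-1 : ℝ) ∈ ZSqrt2 := ⟨-1, 0, by norm_num⟩

lemma zs_βpow (k : ℕ) : β ^ k ∈ ZSqrt2 := by
  induction k with
  | zero => exact ⟨1, 0, by norm_num⟩
  | succ n ih => rw [pow_succ]; exact zs_mul ih zs_β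

lemma zs_Δ (i : ℤ) : Δ i ∈ ZSqrt2 := by
  unfold Δ
  split_ifs with h1 h2
  · exact zs_βpow _
  · exact zs_β
  · exact zs_add zs_sqrt2 (zs_mul zs_neg_one (zs_βpow _))
    |>.imp fun m h => h.imp fun n hn => by linarith [hn]

/-- Sandwich: every `x ∈ (0, β]` lies in some `(β^{k+1}, β^k]` with `k ≥ 1`. -/
lemma pow_sandwich {x : ℝ} (hx : 0 < x) (hxβ : x ≤ β) :
    ∃ k : ℕ, 1 ≤ k ∧ β ^ (k + 1) < x ∧ x ≤ β ^ k := by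
  haveI : DecidablePred fun n : ℕ => β ^ n < x := Classical.decPred _
  obtain ⟨N, hN⟩ := exists_pow_lt_of_lt_one hx βlt1
  have hEx : ∃ n, β ^ n < x := ⟨N, hN⟩
  set n := Nat.find hEx with hn
  have hlt : β ^ n < x := Nat.find_spec hEx
  have hmin : ∀ m < n, ¬ β ^ m < x := fun m hm => Nat.find_min hEx hm
  have hn2 : 2 ≤ n := by
    by_contra h
    interval_cases n
    · simp at hlt; linarith [βlt1]
    · simp at hlt; linarith
  refine ⟨n - 1, by omega, ?_, ?_⟩
  · have : n - 1 + 1 = n := by omega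
    rw [this]; exact hlt
  · have := hmin (n - 1) (by omega)
    linarith [not_lt.mp this]

/-- Coverage: every `s ∈ (0, √2)` lies in some `Iint i`. -/
lemma cover {s : ℝ} (h0 : 0 < s) (h1 : s < Real.sqrt 2) : ∃ i : ℤ, s ∈ Iint i := by
  rcases le_or_gt s β with hsβ | hsβ
  · obtain ⟨k, hk1, hk2, hk3⟩ := pow_sandwich h0 hsβ
    refine ⟨-(k : ℤ), ?_⟩
    have hneg : -(k : ℤ) < 0 := by omega
    have hna : (-(k : ℤ)).natAbs = k := by omega
    have hna' : (-(k : ℤ) - 1).natAbs = k + 1 := by omega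
    simp only [Iint, if_pos hneg, Δ, if_pos hneg, if_pos (show -(k:ℤ) - 1 < 0 by omega),
      hna, hna', Set.mem_Ioc]
    exact ⟨hk2, hk3⟩
  rcases lt_or_ge s 1 with hs1 | hs1
  · exact ⟨0, by simp [Iint, Set.mem_Ioo]; exact ⟨hsβ, hs1⟩⟩
  · have hx0 : 0 < Real.sqrt 2 - s := by linarith
    have hxβ : Real.sqrt 2 - s ≤ β := by unfold β; linarith
    obtain ⟨k, hk1, hk2, hk3⟩ := pow_sandwich hx0 hxβ
    refine ⟨(k : ℤ), ?_⟩
    have hpos : ¬ ((k : ℤ) < 0) := by omega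
    have hne : ¬ ((k : ℤ) = 0) := by omega
    have hna : ((k : ℤ)).natAbs = k := by omega
    have hna' : ((k : ℤ) + 1).natAbs = k + 1 := by omega
    simp only [Iint, if_neg hpos, if_neg hne, Δ, if_neg (show ¬ ((k:ℤ)+1 < 0) by omega),
      if_neg (show ¬ ((k:ℤ)+1 = 0) by omega), hna, hna', Set.mem_Ico]
    constructor
    · linarith
    · linarith

/-- The value `fval i s` lies in `[0, √2]` for `s ∈ Iint i`. -/
lemma fval_mem_Icc {i : ℤ} {s : ℝ} (hs : s ∈ Iint i) :
    fval i s ∈ Set.Icc (0 : ℝ) (Real.sqrt 2) := by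
  have hωp : ∀ m : ℕ, (0 : ℝ) < ω ^ m := fun m => pow_pos ωpos m
  unfold Iint at hs
  unfold fval
  split_ifs with h1 h2
  · -- i < 0
    rw [if_pos h1] at hs
    set k := i.natAbs with hk
    have hk1 : 1 ≤ k := by omega
    have hΔ : Δ i = β ^ k := by simp only [Δ]; rw [if_pos h1]
    have hΔ' : Δ (i - 1) = β ^ (k + 1) := by
      have hna : (i - 1).natAbs = k + 1 := by omega
      simp only [Δ, hna]; rw [if_pos (show i - 1 < 0 by omega)]
    rw [hΔ', hΔ, Set.mem_Ioc] at hs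
    constructor
    · have h0 : 0 ≤ Δ i - s := by rw [hΔ]; linarith [hs.2]
      exact mul_nonneg (le_of_lt (hωp (k + 1))) h0
    · -- ω^{k+1} * (Δ i - s) ≤ √2 = ω - 1
      have key : ω ^ (k + 1) * (Δ i - s) < ω ^ (k + 1) * (β ^ k - β ^ (k + 1)) := by
        apply mul_lt_mul_of_pos_left _ (hωp (k + 1))
        rw [hΔ]; linarith [hs.1]
      have heq : ω ^ (k + 1) * (β ^ k - β ^ (k + 1)) = Real.sqrt 2 := by
        have hb : β ^ k = β ^ (k + 1) * ω := by
          rw [pow_succ, mul_assoc, βω, mul_one]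
        have hsq : Real.sqrt 2 = ω - 1 := by unfold ω; ring
        rw [hb, hsq]
        linear_combination (ω - 1) * βωpow (k + 1)
      linarith [key, heq.ge]
  · -- i = 0
    rw [if_neg h1, if_pos h2] at hs
    rw [Set.mem_Ioo] at hs
    constructor
    · nlinarith [ωpos, hs.1]
    · have : ω * (s - β) < ω * (1 - β) := by
        apply mul_lt_mul_of_pos_left _ ωpos
        linarith [hs.2]
      have heq : ω * (1 - β) = Real.sqrt 2 := by
        unfold ω β; nlinarith [aux_h2]
      linarith
  · -- i > 0
    rw [if_neg h1, if_neg h2] at hs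
    set k := i.natAbs with hk
    have hk1 : 1 ≤ k := by omega
    have hΔ : Δ i = Real.sqrt 2 - β ^ k := by simp [Δ, if_neg h1, if_neg h2]; rfl
    have hΔ' : Δ (i + 1) = Real.sqrt 2 - β ^ (k + 1) := by
      have hna : (i + 1).natAbs = k + 1 := by omega
      simp [Δ, if_neg (show ¬ (i + 1 < 0) by omega), if_neg (show ¬ (i + 1 = 0) by omega), hna]
    rw [hΔ, hΔ', Set.mem_Ico] at hs
    constructor
    · have h0 : 0 ≤ s - Δ i := by rw [hΔ]; linarith [hs.1]
      exact mul_nonneg (le_of_lt (hωp (k + 1))) h0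
    · have key : ω ^ (k + 1) * (s - Δ i) < ω ^ (k + 1) * (β ^ k - β ^ (k + 1)) := by
        apply mul_lt_mul_of_pos_left _ (hωp (k + 1))
        rw [hΔ]; linarith [hs.2]
      have heq : ω ^ (k + 1) * (β ^ k - β ^ (k + 1)) = Real.sqrt 2 := by
        have hb : β ^ k = β ^ (k + 1) * ω := by
          rw [pow_succ, mul_assoc, βω, mul_one]
        have hsq : Real.sqrt 2 = ω - 1 := by unfold ω; ring
        rw [hb, hsq]
        linear_combination (ω - 1) * βωpow (k + 1)
      linarith [key, heq.ge]

/-- If `fval i s ∈ ZSqrt2` and `s ∈ Iint i`, then `s ∈ ZSqrt2`. -/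
lemma mem_of_fval_mem {i : ℤ} {s : ℝ} (hv : fval i s ∈ ZSqrt2) : s ∈ ZSqrt2 := by
  unfold fval at hv
  split_ifs at hv with h1 h2
  · -- s = Δ i - β^{k+1} * fval
    set k := i.natAbs + 1 with hk
    have hs : s = Δ i + (-1) * (β ^ k * (ω ^ k * (Δ i - s))) := by
      linear_combination (Δ i - s) * βωpow k
    rw [hs]
    exact zs_add (zs_Δ i) (zs_mul zs_neg_one (zs_mul (zs_βpow k) hv))
  · -- s = β + β * fval
    have hs : s = β + β * (ω * (s - β)) := by
      linear_combination (β - s) * βω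
    rw [hs]
    exact zs_add zs_β (zs_mul zs_β hv)
  · set k := i.natAbs + 1 with hk
    have hs : s = Δ i + β ^ k * (ω ^ k * (s - Δ i)) := by
      linear_combination (Δ i - s) * βωpow k
    rw [hs]
    exact zs_add (zs_Δ i) (zs_mul (zs_βpow k) hv)

/-- if the orbit of `s ∈ [0,√2]` reaches `0`, then `s ∈ ℤ[√2]`. -/
theorem luroth_terminating_mem_Zsqrt2 (f : ℝ → ℝ) (hf : IsLuroth f) :
    ∀ s ∈ Set.Icc (0 : ℝ) (Real.sqrt 2),
      (∃ n : ℕ, f^[n] s = 0) → s ∈ ZSqrt2 := by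
  obtain ⟨hf0, hfs, hff⟩ := hf
  intro s hs ⟨n, hn⟩
  induction n generalizing s with
  | zero =>
    simp only [Function.iterate_zero, id] at hn
    exact ⟨0, 0, by simp [hn]⟩
  | succ n ih =>
    rcases eq_or_lt_of_le hs.1 with h0 | h0
    · exact ⟨0, 0, by simp [← h0]⟩
    rcases eq_or_lt_of_le hs.2 with h1 | h1
    · exact ⟨0, 1, by simp [h1]⟩
    obtain ⟨i, hi⟩ := cover h0 h1
    have hfeq : f s = fval i s := hff i s hi
    have hmem : f s ∈ Set.Icc (0 : ℝ) (Real.sqrt 2) := by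
      rw [hfeq]; exact fval_mem_Icc hi
    have hiter : f^[n] (f s) = 0 := by
      rw [← Function.iterate_succ_apply]; exact hn
    have hfz : f s ∈ ZSqrt2 := ih (f s) hmem hiter
    rw [hfeq] at hfz
    exact mem_of_fval_mem hfz
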